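/- The bounded distributive lattice of monotone Boolean functions is free on the coordinate evaluations: let n : ℕ and let M_n be the lattice of monotone functions (Fin n → Bool) →o Bool, with the pointwise order (which is a distributive lattice with a bottom and a top element). Let e : Fin n → M_n send i to the evaluation map x ↦ x i. Then for every distributive lattice L that is a bounded order and every function g : Fin n → L, there exists a unique bounded lattice homomorphism h : M_n → L (preserving ⊓, ⊔, ⊥, ⊤) such that h (e i) = g i for all i : Fin n. -/

import Mathlib

namespace Stmt4

/-- The lattice `M_n` of monotone Boolean functions on the `n`-cube. -/
abbrev MBF (n : ℕ) := (Fin n → Bool) →o Bool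

/-- The `i`-th coordinate evaluation, as a monotone Boolean function. -/
def eval {n : ℕ} (i : Fin n) : MBF n :=
  ⟨fun x => x i, fun _ _ h => h i⟩

noncomputable instance (n : ℕ) : BoundedOrder (MBF n) :=
  { (inferInstance : OrderTop (MBF n)), (inferInstance : OrderBot (MBF n)) with }

section Aux

variable {n : ℕ} {L : Type*} [Lattice L] [BoundedOrder L]

lemma mbf_inf_apply (f f' : MBF n) (x : Fin n → Bool) :
    ((f ⊓ f') x = true) ↔ (f x = true ∧ f' x = true) := by
  simp only [OrderHom.coe_inf, Pi.inf_apply, Bool.min_eq_and, Bool.and_eq_true]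

/-- The minterm associated to a point of the cube. -/
def minterm (g : Fin n → L) (x : Fin n → Bool) : L :=
  (Finset.univ.filter (fun i => x i = true)).inf g

/-- The candidate homomorphism, by disjunctive normal form. -/
def hfun (g : Fin n → L) (f : MBF n) : L :=
  (Finset.univ.filter (fun x => f x = true)).sup (minterm g)

lemma filter_sup (x x' : Fin n → Bool) :
    Finset.univ.filter (fun i => (x ⊔ x') i = true) =
      Finset.univ.filter (fun i => x i = true) ∪ Finset.univ.filter (fun i => x' i = true) := by
  ext i
  simp [Bool.or_eq_true]

lemma minterm_sup (g : Fin n → L) (x x' : Fin n → Bool) :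
    minterm g (x ⊔ x') = minterm g x ⊓ minterm g x' := by
  rw [minterm, filter_sup, Finset.inf_union]; rfl

lemma hfun_inf {L : Type*} [DistribLattice L] [BoundedOrder L] (g : Fin n → L) (f f' : MBF n) :
    hfun g (f ⊓ f') = hfun g f ⊓ hfun g f' := by
  apply le_antisymm
  · refine Finset.sup_le fun x hx => ?_
    simp only [Finset.mem_filter, mbf_inf_apply] at hx
    exact le_inf
      (Finset.le_sup (by simp [hx.2.1]))
      (Finset.le_sup (by simp [hx.2.2]))
  · rw [hfun, hfun, Finset.sup_inf_sup]
    refine Finset.sup_le fun p hp => ?_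
    simp only [Finset.mem_product, Finset.mem_filter] at hp
    rw [← minterm_sup]
    refine Finset.le_sup (f := minterm g) ?_
    simp only [Finset.mem_filter, Finset.mem_univ, true_and]
    rw [mbf_inf_apply]
    constructor
    · have := f.monotone (le_sup_left : p.1 ≤ p.1 ⊔ p.2)
      rw [hp.1.2] at this; exact Bool.eq_true_of_true_le this
    · have := f'.monotone (le_sup_right : p.2 ≤ p.1 ⊔ p.2)
      rw [hp.2.2] at this; exact Bool.eq_true_of_true_le this

lemma hfun_sup (g : Fin n → L) (f f' : MBF n) :
    hfun g (f ⊔ f') = hfun g f ⊔ hfun g f' := by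
  rw [hfun, hfun, hfun, ← Finset.sup_union]
  congr 1
  ext x
  simp [Bool.or_eq_true]

lemma hfun_bot (g : Fin n → L) : hfun g (⊥ : MBF n) = ⊥ := by
  rw [hfun]
  convert Finset.sup_empty
  ext x
  simp

lemma hfun_top (g : Fin n → L) : hfun g (⊤ : MBF n) = ⊤ := by
  refine le_antisymm le_top ?_
  have : minterm g (fun _ => false) = ⊤ := by
    rw [minterm]
    convert Finset.inf_empty
    ext i
    simp
  rw [← this]
  exact Finset.le_sup (by simp)

lemma hfun_eval (g : Fin n → L) (i : Fin n) : hfun g (eval i) = g i := by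
  apply le_antisymm
  · refine Finset.sup_le fun x hx => ?_
    simp only [Finset.mem_filter] at hx
    exact Finset.inf_le (by simp [eval] at hx ⊢; exact hx)
  · have h1 : minterm g (fun j => decide (j = i)) = g i := by
      rw [minterm]
      have : Finset.univ.filter (fun j => decide (j = i) = true) = {i} := by
        ext j; simp
      rw [this, Finset.inf_singleton]
    rw [← h1]
    exact Finset.le_sup (by simp only [Finset.mem_filter, Finset.mem_univ, true_and]; exact decide_eq_true rfl)

lemma finset_sup_apply {α : Type*} (s : Finset α) (F : α → MBF n) (y : Fin n → Bool) :
    (s.sup F) y = s.sup (fun a => F a y) := by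
  classical
  induction s using Finset.induction with
  | empty => simp
  | insert _ _ h ih => simp [Finset.sup_insert, ih]

lemma finset_inf_apply {α : Type*} (s : Finset α) (F : α → MBF n) (y : Fin n → Bool) :
    (s.inf F) y = s.inf (fun a => F a y) := by
  classical
  induction s using Finset.induction with
  | empty => simp
  | insert _ _ h ih => simp [Finset.inf_insert, ih]

lemma bool_inf_eq_true {α : Type*} (s : Finset α) (p : α → Bool) :
    s.inf p = true ↔ ∀ a ∈ s, p a = true := by
  rw [show (true = (⊤ : Bool)) from rfl]
  exact Finset.inf_eq_top_iff p s

lemma bool_sup_eq_true {α : Type*} (s : Finset α) (p : α → Bool) :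
    s.sup p = true ↔ ∃ a ∈ s, p a = true := by
  constructor
  · intro h
    by_contra hc
    push_neg at hc
    have : s.sup p = ⊥ := (Finset.sup_eq_bot_iff p s).2 fun a ha =>
      Bool.eq_false_iff.2 (hc a ha)
    simp [this] at h
  · rintro ⟨a, ha, hpa⟩
    exact le_antisymm (by simp) (hpa ▸ Finset.le_sup ha)

/-- Disjunctive normal form: every monotone Boolean function is the sup of
the minterms of the points where it is true. -/
lemma dnf (f : MBF n) : hfun (fun i => eval i) f = f := by
  ext y
  rw [hfun, finset_sup_apply, Bool.eq_iff_iff, bool_sup_eq_true]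
  constructor
  · rintro ⟨x, hx, hxy⟩
    simp only [Finset.mem_filter, Finset.mem_univ, true_and] at hx
    rw [minterm, finset_inf_apply, bool_inf_eq_true] at hxy
    have hle : x ≤ y := by
      intro i
      by_cases hxi : x i = true
      · have := hxy i (by simp [hxi])
        simp only [eval, OrderHom.coe_mk] at this
        rw [hxi, show y i = true from this]
      · simp [Bool.eq_false_iff.2 hxi]
    have := f.monotone hle
    rw [hx] at this
    exact Bool.eq_true_of_true_le this
  · intro hy
    refine ⟨y, by simp [hy], ?_⟩
    rw [minterm, finset_inf_apply, bool_inf_eq_true]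
    intro i hi
    simp only [Finset.mem_filter] at hi
    exact hi.2

end Aux

/-- The bounded distributive lattice of monotone Boolean functions in `n`
variables is free on the coordinate evaluations: every assignment of the
generators to a bounded distributive lattice `L` extends to a unique bounded
lattice homomorphism. -/
theorem monotone_boolean_functions_free
    (n : ℕ) (L : Type*) [DistribLattice L] [BoundedOrder L] (g : Fin n → L) :
    ∃! h : BoundedLatticeHom (MBF n) L, ∀ i : Fin n, h (eval i) = g i := by
  refine ⟨⟨⟨⟨hfun g, hfun_sup g⟩, hfun_inf g⟩, hfun_top g, hfun_bot g⟩,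
    fun i => hfun_eval g i, ?_⟩
  intro h' hh'
  ext f
  show h' f = hfun g f
  conv_lhs => rw [← dnf f]
  rw [hfun, map_finset_sup]
  rw [hfun]
  refine Finset.sup_congr rfl fun x _ => ?_
  show h' (minterm (fun i => eval i) x) = minterm g x
  rw [minterm, map_finset_inf, minterm]
  exact Finset.inf_congr rfl fun i _ => hh' i

end Stmt4
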